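/- The class of Borel graphable equivalence relations is not closed under taking subequivalence relations: there exist analytic equivalence relations E' ⊆ E'' on a Polish space Y such that E'' is Borel graphable but E' is not. -/

import Mathlib

open MeasureTheory

/-- An equivalence relation on a measurable (Polish) space is *Borel graphable* if it is the
connectedness (finite path) relation of a Borel symmetric irreflexive graph. -/
def BorelGraphable {X : Type*} [MeasurableSpace X] (E : X → X → Prop) : Prop :=
  ∃ G : X → X → Prop, MeasurableSet {p : X × X | G p.1 p.2} ∧
    Symmetric G ∧ Irreflexive G ∧ ∀ x y, E x y ↔ Relation.ReflTransGen G x y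

namespace Stmt9Aux

open Set

abbrev N := ℕ → ℕ

instance iP2 : PolishSpace (N × N) := inferInstance
instance iP3 : PolishSpace (N × N × N) := inferInstance

def Cyl (s : List ℕ) : Set N := {x | ∀ i, i < s.length → x i = s.getD i 0}

lemma isOpen_Cyl (s : List ℕ) : IsOpen (Cyl s) := by
  have h : Cyl s = ⋂ i : Fin s.length, (fun x : N => x i) ⁻¹' {s.getD i 0} := by
    ext x
    simp only [Cyl, mem_setOf_eq, mem_iInter, mem_preimage, mem_singleton_iff]
    exact ⟨fun h i => h i i.2, fun h i hi => h ⟨i, hi⟩⟩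
  rw [h]
  exact isOpen_iInter_of_finite fun i =>
    (isOpen_discrete _).preimage (continuous_apply (i : ℕ))

lemma isClosed_Cyl (s : List ℕ) : IsClosed (Cyl s) := by
  have h : Cyl s = ⋂ i : Fin s.length, (fun x : N => x i) ⁻¹' {s.getD i 0} := by
    ext x
    simp only [Cyl, mem_setOf_eq, mem_iInter, mem_preimage, mem_singleton_iff]
    exact ⟨fun h i => h i i.2, fun h i hi => h ⟨i, hi⟩⟩
  rw [h]
  exact isClosed_iInter fun i => (isClosed_discrete _).preimage (continuous_apply (i : ℕ))

lemma cyl_basis {O : Set N} (hO : IsOpen O) {x : N} (hx : x ∈ O) :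
    ∃ s, x ∈ Cyl s ∧ Cyl s ⊆ O := by
  obtain ⟨t, ⟨y, n, rfl⟩, hxt, htO⟩ :=
    (PiNat.isTopologicalBasis_cylinders (fun _ : ℕ => ℕ)).exists_subset_of_mem_open hx hO
  refine ⟨List.ofFn (fun i : Fin n => x i), ?_, ?_⟩
  · intro i hi
    have hn : i < n := by simpa using hi
    simp [List.ofFnNthVal, hn]
  · intro z hz
    apply htO
    intro i hi
    have hzi : z i = x i := by
      have := hz i
      simpa [hi] using this
    rw [hzi]
    exact hxt i hi


lemma cyl2_basis {O : Set (N × N)} (hO : IsOpen O) {p : N × N} (hp : p ∈ O) :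
    ∃ s t, p ∈ Cyl s ×ˢ Cyl t ∧ Cyl s ×ˢ Cyl t ⊆ O := by
  obtain ⟨U, V, hU, hV, hxU, hyV, hUV⟩ := isOpen_prod_iff.1 hO p.1 p.2 hp
  obtain ⟨s, hs1, hs2⟩ := cyl_basis hU hxU
  obtain ⟨t, ht1, ht2⟩ := cyl_basis hV hyV
  exact ⟨s, t, ⟨hs1, ht1⟩, fun q hq => hUV ⟨hs2 hq.1, ht2 hq.2⟩⟩

def code : ℕ → List ℕ × List ℕ := (Denumerable.eqv (List ℕ × List ℕ)).symm

lemma code_surj (p : List ℕ × List ℕ) : ∃ n, code n = p :=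
  ⟨Denumerable.eqv (List ℕ × List ℕ) p, Equiv.symm_apply_apply _ _⟩

def B (n : ℕ) : Set (N × N) := Cyl (code n).1 ×ˢ Cyl (code n).2

lemma isOpen_B (n : ℕ) : IsOpen (B n) := (isOpen_Cyl _).prod (isOpen_Cyl _)

lemma mem_B_univ (p : N × N) : ∃ n, p ∈ B n := by
  obtain ⟨n, hn⟩ := code_surj ([], [])
  refine ⟨n, ?_⟩
  simp [B, hn, Cyl]

def F : Set (N × N × N) := {q | ∀ n, q.1 n = 0 ∨ (q.2.1, q.2.2) ∉ B n}

lemma isClosed_F : IsClosed F := by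
  have h : F = ⋂ n, ({q : N × N × N | q.1 n = 0} ∪ {q : N × N × N | (q.2.1, q.2.2) ∈ B n}ᶜ) := by
    ext q; simp [F, mem_iInter]
  rw [h]
  refine isClosed_iInter fun n => IsClosed.union ?_ ?_
  · exact isClosed_eq ((continuous_apply n).comp continuous_fst) continuous_const
  · exact isClosed_compl_iff.2 <| (isOpen_B n).preimage
      ((continuous_fst.comp continuous_snd).prodMk (continuous_snd.comp continuous_snd))

def U : Set (N × N) := (fun q : N × N × N => (q.1, q.2.1)) '' F

lemma U_analytic : AnalyticSet U :=
  isClosed_F.analyticSet.image_of_continuous (continuous_fst.prodMk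
    (continuous_fst.comp continuous_snd))

lemma mem_U {z x : N} : (z, x) ∈ U ↔ ∃ y, (z, x, y) ∈ F := by
  constructor
  · rintro ⟨⟨z', x', y⟩, hF, h⟩
    have h1 : z' = z := congrArg Prod.fst h
    have h2 : x' = x := congrArg Prod.snd h
    subst h1; subst h2
    exact ⟨y, hF⟩
  · rintro ⟨y, hy⟩
    exact ⟨(z, x, y), hy, rfl⟩

lemma universal {s : Set N} (hs : AnalyticSet s) : ∃ z : N, ∀ x, ((z, x) ∈ U ↔ x ∈ s) := by
  classical
  rw [AnalyticSet_def] at hs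
  rcases hs with rfl | ⟨g, hg, rfl⟩
  · refine ⟨fun _ => 1, fun x => ?_⟩
    simp only [mem_empty_iff_false, iff_false]
    rw [mem_U]
    rintro ⟨y, hy⟩
    obtain ⟨n, hn⟩ := mem_B_univ (x, y)
    rcases hy n with h | h
    · exact one_ne_zero h
    · exact h hn
  · set C : Set (N × N) := {p | g p.2 = p.1} with hC
    have hCc : IsClosed C := isClosed_eq (hg.comp continuous_snd) continuous_fst
    set z : N := fun n => if B n ⊆ Cᶜ then 1 else 0 with hz
    have key : ∀ p : N × N, (∀ n, z n = 0 ∨ p ∉ B n) ↔ p ∈ C := by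
      intro p
      constructor
      · intro h
        by_contra hp
        obtain ⟨s, t, hp1, hp2⟩ := cyl2_basis hCc.isOpen_compl (show p ∈ Cᶜ from hp)
        obtain ⟨n, hn⟩ := code_surj (s, t)
        have hB : B n = Cyl s ×ˢ Cyl t := by simp [B, hn]
        rcases h n with h0 | h0
        · rw [hz] at h0
          simp only [hB ▸ hp2, if_true] at h0
          exact one_ne_zero h0
        · exact h0 (hB ▸ hp1)
      · intro hp n
        by_cases hsub : B n ⊆ Cᶜ
        · exact Or.inr fun hmem => hsub hmem hp
        · exact Or.inl (by simp [hz, hsub])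
    refine ⟨z, fun x => ?_⟩
    rw [mem_U]
    constructor
    · rintro ⟨y, hy⟩
      have : (x, y) ∈ C := (key (x, y)).1 hy
      exact ⟨y, this⟩
    · rintro ⟨y, rfl⟩
      exact ⟨y, (key (g y, y)).2 rfl⟩

def A : Set N := {x | (x, x) ∈ U}

lemma A_analytic : AnalyticSet A :=
  U_analytic.preimage (continuous_id.prodMk continuous_id)

lemma A_not_meas : ¬ MeasurableSet A := by
  intro h
  obtain ⟨z, hz⟩ := universal h.compl.analyticSet
  have h1 := hz z
  by_cases hA : z ∈ A
  · exact (h1.1 hA) hA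
  · exact hA (h1.2 hA)


def fc (k : ℕ) (a : N) : N := fun n => Nat.casesOn n k (fun m => a m)

lemma fc_zero (k : ℕ) (a : N) : fc k a 0 = k := rfl
lemma fc_succ (k : ℕ) (a : N) (n : ℕ) : fc k a (n + 1) = a n := rfl

lemma fc_cont (k : ℕ) : Continuous (fc k) := by
  apply continuous_pi
  intro n
  cases n with
  | zero => exact continuous_const
  | succ m => exact continuous_apply m

lemma fc_inj (k : ℕ) : Function.Injective (fc k) := by
  intro a b h
  funext n
  have := congrFun h (n + 1)
  simpa [fc_succ] using this

lemma fc_ne (a b : N) : fc 0 a ≠ fc 1 b := by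
  intro h
  have := congrFun h 0
  simp [fc_zero] at this

def E1 (x y : N) : Prop :=
  x = y ∨ ∃ a ∈ A, (x = fc 0 a ∧ y = fc 1 a) ∨ (x = fc 1 a ∧ y = fc 0 a)

def E2 (x y : N) : Prop := ∀ n, x (n + 1) = y (n + 1)

lemma E1_equiv : Equivalence E1 := by
  constructor
  · intro x; exact Or.inl rfl
  · rintro x y (rfl | ⟨a, ha, ⟨rfl, rfl⟩ | ⟨rfl, rfl⟩⟩)
    · exact Or.inl rfl
    · exact Or.inr ⟨a, ha, Or.inr ⟨rfl, rfl⟩⟩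
    · exact Or.inr ⟨a, ha, Or.inl ⟨rfl, rfl⟩⟩
  · rintro x y z (rfl | ⟨a, ha, ⟨rfl, rfl⟩ | ⟨rfl, rfl⟩⟩) h2
    · exact h2
    · rcases h2 with rfl | ⟨b, hb, ⟨h1, rfl⟩ | ⟨h1, rfl⟩⟩
      · exact Or.inr ⟨a, ha, Or.inl ⟨rfl, rfl⟩⟩
      · exact absurd h1.symm (fc_ne b a)
      · exact Or.inl (congrArg (fc 0) (fc_inj 1 h1))
    · rcases h2 with rfl | ⟨b, hb, ⟨h1, rfl⟩ | ⟨h1, rfl⟩⟩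
      · exact Or.inr ⟨a, ha, Or.inr ⟨rfl, rfl⟩⟩
      · exact Or.inl (by rw [fc_inj 0 h1])
      · exact absurd h1 (fc_ne a b)

lemma E2_equiv : Equivalence E2 :=
  ⟨fun x n => rfl, fun h n => (h n).symm, fun h1 h2 n => (h1 n).trans (h2 n)⟩

lemma E1_sub_E2 : ∀ x y, E1 x y → E2 x y := by
  rintro x y (rfl | ⟨a, ha, ⟨rfl, rfl⟩ | ⟨rfl, rfl⟩⟩) <;> intro n <;> rfl

lemma E2_closed : IsClosed {p : N × N | E2 p.1 p.2} := by
  have h : {p : N × N | E2 p.1 p.2} = ⋂ n, {p : N × N | p.1 (n + 1) = p.2 (n + 1)} := by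
    ext p; simp [E2, mem_iInter]
  rw [h]
  exact isClosed_iInter fun n => isClosed_eq
    ((continuous_apply (n + 1)).comp continuous_fst)
    ((continuous_apply (n + 1)).comp continuous_snd)

lemma analytic_union {α : Type*} [TopologicalSpace α] {s t : Set α}
    (hs : AnalyticSet s) (ht : AnalyticSet t) : AnalyticSet (s ∪ t) := by
  rw [Set.union_eq_iUnion]
  exact AnalyticSet.iUnion fun b => by cases b <;> simpa

lemma E1_analytic : AnalyticSet {p : N × N | E1 p.1 p.2} := by
  have h : {p : N × N | E1 p.1 p.2} =
      {p : N × N | p.1 = p.2} ∪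
      ((fun a => (fc 0 a, fc 1 a)) '' A ∪ (fun a => (fc 1 a, fc 0 a)) '' A) := by
    ext ⟨x, y⟩
    simp only [E1, mem_setOf_eq, mem_union, mem_image]
    constructor
    · rintro (rfl | ⟨a, ha, ⟨rfl, rfl⟩ | ⟨rfl, rfl⟩⟩)
      · exact Or.inl rfl
      · exact Or.inr (Or.inl ⟨a, ha, rfl⟩)
      · exact Or.inr (Or.inr ⟨a, ha, rfl⟩)
    · rintro (h | ⟨a, ha, h⟩ | ⟨a, ha, h⟩)
      · exact Or.inl h
      · obtain ⟨h1, h2⟩ := Prod.mk.injEq .. ▸ h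
        exact Or.inr ⟨a, ha, Or.inl ⟨h1.symm, h2.symm⟩⟩
      · obtain ⟨h1, h2⟩ := Prod.mk.injEq .. ▸ h
        exact Or.inr ⟨a, ha, Or.inr ⟨h1.symm, h2.symm⟩⟩
  rw [h]
  refine analytic_union ?_ (analytic_union ?_ ?_)
  · exact (isClosed_eq continuous_fst continuous_snd).analyticSet
  · exact A_analytic.image_of_continuous ((fc_cont 0).prodMk (fc_cont 1))
  · exact A_analytic.image_of_continuous ((fc_cont 1).prodMk (fc_cont 0))


lemma E2_graphable : BorelGraphable E2 := by
  refine ⟨fun x y => x ≠ y ∧ E2 x y, ?_, ?_, ?_, ?_⟩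
  · have h : {p : N × N | p.1 ≠ p.2 ∧ E2 p.1 p.2} =
        {p : N × N | p.1 = p.2}ᶜ ∩ {p : N × N | E2 p.1 p.2} := by
      ext p; simp [mem_inter_iff]
    rw [h]
    exact ((isClosed_eq continuous_fst continuous_snd).measurableSet.compl).inter
      E2_closed.measurableSet
  · exact fun x y h => ⟨h.1.symm, fun n => (h.2 n).symm⟩
  · exact fun x h => h.1 rfl
  · intro x y
    constructor
    · intro h
      by_cases hxy : x = y
      · exact hxy ▸ Relation.ReflTransGen.refl
      · exact Relation.ReflTransGen.single ⟨hxy, h⟩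
    · intro h
      induction h with
      | refl => exact fun n => rfl
      | tail _ h2 ih => exact fun n => (ih n).trans (h2.2 n)

lemma E1_not_graphable : ¬ BorelGraphable E1 := by
  rintro ⟨G, hmeas, hsym, hirr, hiff⟩
  have hsub : ∀ x y, Relation.ReflTransGen G x y → E1 x y := by
    intro x y h
    induction h with
    | refl => exact E1_equiv.refl x
    | tail _ h2 ih => exact E1_equiv.trans ih ((hiff _ _).2 (Relation.ReflTransGen.single h2))
  have key : ∀ a : N, a ∈ A ↔ G (fc 0 a) (fc 1 a) := by
    intro a
    constructor
    · intro ha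
      have hE : E1 (fc 0 a) (fc 1 a) := Or.inr ⟨a, ha, Or.inl ⟨rfl, rfl⟩⟩
      have hpath := (hiff _ _).1 hE
      rcases (Relation.ReflTransGen.cases_head hpath) with heq | ⟨c, hGc, hc⟩
      · exact absurd heq (fc_ne a a)
      · -- c is E1-related to fc 0 a and c ≠ fc 0 a, so c = fc 1 a
        have hE1c : E1 (fc 0 a) c := (hiff _ _).2 (Relation.ReflTransGen.single hGc)
        have hne : c ≠ fc 0 a := fun h => hirr _ (h ▸ hGc)
        rcases hE1c with heq | ⟨b, _, ⟨h1, h2⟩ | ⟨h1, h2⟩⟩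
        · exact absurd heq.symm hne
        · have hb : b = a := fc_inj 0 h1.symm
          subst hb
          rw [h2] at hGc
          exact hGc
        · exact absurd h1 (fc_ne a b)
    · intro hG
      have hE : E1 (fc 0 a) (fc 1 a) := hsub _ _ (Relation.ReflTransGen.single hG)
      rcases hE with heq | ⟨b, hb, ⟨h1, h2⟩ | ⟨h1, h2⟩⟩
      · exact absurd heq (fc_ne a a)
      · exact (fc_inj 0 h1.symm) ▸ hb
      · exact absurd h1 (fc_ne a b)
  have hA : A = (fun a => (fc 0 a, fc 1 a)) ⁻¹' {p : N × N | G p.1 p.2} := by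
    ext a
    simp only [mem_preimage, mem_setOf_eq]
    exact key a
  exact A_not_meas (hA ▸ hmeas.preimage ((fc_cont 0).prodMk (fc_cont 1)).measurable)


end Stmt9Aux

/-- Borel graphability is not closed under taking subequivalence relations: on a Polish
space there are analytic equivalence relations `E' ⊆ E''` with `E''` Borel graphable but
`E'` not Borel graphable. -/
theorem stmt9 :
    ∃ E' E'' : (ℕ → ℕ) → (ℕ → ℕ) → Prop,
      Equivalence E' ∧ Equivalence E'' ∧
      AnalyticSet {p : (ℕ → ℕ) × (ℕ → ℕ) | E' p.1 p.2} ∧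
      AnalyticSet {p : (ℕ → ℕ) × (ℕ → ℕ) | E'' p.1 p.2} ∧
      (∀ x y, E' x y → E'' x y) ∧
      BorelGraphable E'' ∧ ¬ BorelGraphable E' := by
  exact ⟨Stmt9Aux.E1, Stmt9Aux.E2, Stmt9Aux.E1_equiv, Stmt9Aux.E2_equiv,
    Stmt9Aux.E1_analytic, Stmt9Aux.E2_closed.analyticSet, Stmt9Aux.E1_sub_E2,
    Stmt9Aux.E2_graphable, Stmt9Aux.E1_not_graphable⟩
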